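/- Let λ < 0 and let a, c, d be real numbers with c < 0 < a, d ≥ 0, satisfying 1 + λ² + a·c − c² = 0. Set ρ₁ = (√(4c(2c−a)+d²)+d)/2 and ρ₂ = (√(4c(2c−a)+d²)−d)/2, and define y : ℝ² → ℂ³ by y(v,w) = ( √((λ²+1)/((c−a)(2c−a)))·e^{i(c−a)v}, √((λ²+1)/(ρ₁(ρ₁+ρ₂)))·e^{−i(cv+ρ₁w)}, √((λ²+1)/(ρ₂(ρ₁+ρ₂)))·e^{−i(cv−ρ₂w)} ). Then for every (v,w): ‖y(v,w)‖ = 1, ⟨∂y/∂v, i·y⟩_ℝ = 0, and ⟨∂y/∂w, i·y⟩_ℝ = 0; i.e. y is a Legendrian surface in the unit sphere S⁵ ⊂ ℂ³. -/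

import Mathlib

open scoped ComplexInnerProductSpace

theorem aux_hasDerivAt (r : ℝ) (u : ℂ) {f : ℝ → ℝ} {f' : ℝ} {t : ℝ} (hf : HasDerivAt f f' t) :
    HasDerivAt (fun s : ℝ => (r:ℂ) * Complex.exp (u * ((f s : ℝ):ℂ)))
      (u * f' * ((r:ℂ) * Complex.exp (u * ((f t : ℝ):ℂ)))) t := by
  have h1 : HasDerivAt (fun s : ℝ => u * ((f s : ℝ):ℂ)) (u * f') t :=
    (hf.ofReal_comp).const_mul u
  have h2 := (h1.cexp).const_mul (r:ℂ)
  convert h2 using 1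
  · rfl
  · ring

theorem exp_I_ofReal (θ : ℝ) : Complex.exp (Complex.I * (θ:ℂ)) =
    ((Real.cos θ : ℝ) : ℂ) + ((Real.sin θ : ℝ) : ℂ) * Complex.I := by
  rw [mul_comm, Complex.exp_mul_I, Complex.ofReal_cos, Complex.ofReal_sin]

theorem exp_negI_ofReal (θ : ℝ) : Complex.exp (-Complex.I * (θ:ℂ)) =
    ((Real.cos θ : ℝ) : ℂ) - ((Real.sin θ : ℝ) : ℂ) * Complex.I := by
  have h : -Complex.I * (θ:ℂ) = ((-θ : ℝ):ℂ) * Complex.I := by push_cast; ring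
  rw [h, Complex.exp_mul_I, Complex.ofReal_cos, Complex.ofReal_sin]
  push_cast
  rw [Complex.cos_neg, Complex.sin_neg]
  ring

/-- the surface y(v,w) built from (λ,a,c,d) is a Legendrian surface in S⁵ ⊂ ℂ³. -/
theorem stmt_12 (lam a c d : ℝ) (hlam : lam < 0)
    (hc : c < 0) (ha : 0 < a) (hd : 0 ≤ d)
    (hrel : 1 + lam^2 + a*c - c^2 = 0)
    (ρ₁ ρ₂ : ℝ)
    (hρ₁ : ρ₁ = (Real.sqrt (4*c*(2*c - a) + d^2) + d)/2)
    (hρ₂ : ρ₂ = (Real.sqrt (4*c*(2*c - a) + d^2) - d)/2)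
    (y : ℝ → ℝ → EuclideanSpace ℂ (Fin 3))
    (hy : ∀ v w : ℝ, y v w = (WithLp.equiv 2 (Fin 3 → ℂ)).symm
      ![((Real.sqrt ((lam^2 + 1)/((c - a)*(2*c - a))) : ℝ) : ℂ)
          * Complex.exp (Complex.I * (((c - a)*v : ℝ) : ℂ)),
        ((Real.sqrt ((lam^2 + 1)/(ρ₁*(ρ₁ + ρ₂))) : ℝ) : ℂ)
          * Complex.exp (-Complex.I * ((c*v + ρ₁*w : ℝ) : ℂ)),
        ((Real.sqrt ((lam^2 + 1)/(ρ₂*(ρ₁ + ρ₂))) : ℝ) : ℂ)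
          * Complex.exp (-Complex.I * ((c*v - ρ₂*w : ℝ) : ℂ))]) :
    ∀ v w : ℝ, ‖y v w‖ = 1 ∧
      (⟪deriv (fun t => y t w) v, Complex.I • y v w⟫).re = 0 ∧
      (⟪deriv (fun t => y v t) w, Complex.I • y v w⟫).re = 0 := by
  -- real algebra preliminaries
  have h2ca : 2*c - a < 0 := by linarith
  have hca : c - a < 0 := by linarith
  have hins : 0 < 4*c*(2*c-a) + d^2 := by nlinarith
  set s := Real.sqrt (4*c*(2*c - a) + d^2) with hs
  have hs2 : s^2 = 4*c*(2*c-a) + d^2 := Real.sq_sqrt hins.le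
  have hs0 : 0 < s := Real.sqrt_pos.mpr hins
  have hsd : d < s := by nlinarith
  have hr1pos : 0 < ρ₁ := by rw [hρ₁]; linarith
  have hr2pos : 0 < ρ₂ := by rw [hρ₂]; linarith
  have hsum : ρ₁ + ρ₂ = s := by rw [hρ₁, hρ₂]; ring
  have hprod : ρ₁ * ρ₂ = c*(2*c-a) := by rw [hρ₁, hρ₂]; nlinarith [hs2]
  have hL : lam^2 + 1 = c^2 - a*c := by linarith
  have hden1 : 0 < (c-a)*(2*c-a) := mul_pos_of_neg_of_neg hca h2ca
  set q1 := (lam^2+1)/((c-a)*(2*c-a)) with hq1def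
  set q2 := (lam^2+1)/(ρ₁*(ρ₁+ρ₂)) with hq2def
  set q3 := (lam^2+1)/(ρ₂*(ρ₁+ρ₂)) with hq3def
  have hq1 : 0 < q1 := by rw [hq1def]; positivity
  have hq2 : 0 < q2 := by rw [hq2def]; positivity
  have hq3 : 0 < q3 := by rw [hq3def]; positivity
  have hsum1 : q1 + q2 + q3 = 1 := by
    rw [hq1def, hq2def, hq3def]
    rw [div_add_div _ _ (by positivity) (by positivity), div_add_div _ _ (by positivity) (by positivity)]
    rw [div_eq_one_iff_eq (by positivity)]
    linear_combination ((ρ₁+ρ₂)^2*((lam^2+1) - (c-a)*(2*c-a))) * hprod + ((ρ₁+ρ₂)^2*(2*c-a)^2) * hL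
  have hcv : (c-a) * q1 - c * q2 - c * q3 = 0 := by
    rw [hq1def, hq2def, hq3def]
    field_simp [hca.ne, (show c*2 - a ≠ 0 by linarith)]
    linear_combination ((ρ₁+ρ₂)*(lam^2+1)) * hprod
  have hcw : -ρ₁ * q2 + ρ₂ * q3 = 0 := by
    rw [hq2def, hq3def]
    field_simp
    ring
  -- amplitudes
  set r1 := Real.sqrt q1 with hr1def
  set r2 := Real.sqrt q2 with hr2def
  set r3 := Real.sqrt q3 with hr3def
  have hr1sq : r1^2 = q1 := Real.sq_sqrt hq1.le
  have hr2sq : r2^2 = q2 := Real.sq_sqrt hq2.le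
  have hr3sq : r3^2 = q3 := Real.sq_sqrt hq3.le
  intro v w
  have P1 := Real.sin_sq_add_cos_sq ((c-a)*v)
  have P2 := Real.sin_sq_add_cos_sq (c*v + ρ₁*w)
  have P3 := Real.sin_sq_add_cos_sq (c*v - ρ₂*w)
  refine ⟨?_, ?_, ?_⟩
  · -- norm
    rw [hy v w, EuclideanSpace.norm_eq]
    simp only [WithLp.equiv_symm_apply, PiLp.toLp_apply, Fin.sum_univ_three, Matrix.cons_val_zero,
      Matrix.cons_val_one, Matrix.head_cons, Matrix.cons_val_two, Matrix.tail_cons]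
    rw [exp_I_ofReal, exp_negI_ofReal, exp_negI_ofReal]
    simp only [Complex.sq_norm, Complex.normSq_apply,
      Complex.add_re, Complex.add_im, Complex.sub_re, Complex.sub_im,
      Complex.mul_re, Complex.mul_im, Complex.ofReal_re, Complex.ofReal_im,
      Complex.I_re, Complex.I_im]
    rw [show ∀ x : ℝ, x = 1 → Real.sqrt x = 1 from fun x hx => by rw [hx, Real.sqrt_one]]
    linear_combination hr1sq + hr2sq + hr3sq + hsum1 + (r1^2)*P1 + (r2^2)*P2 + (r3^2)*P3
  · -- v-direction
    have hf1 : HasDerivAt (fun t : ℝ => (c-a)*t) (c-a) v := by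
      simpa using (hasDerivAt_id v).const_mul (c-a)
    have hf2 : HasDerivAt (fun t : ℝ => c*t + ρ₁*w) c v := by
      simpa using ((hasDerivAt_id v).const_mul c).add_const (ρ₁*w)
    have hf3 : HasDerivAt (fun t : ℝ => c*t - ρ₂*w) c v := by
      simpa using ((hasDerivAt_id v).const_mul c).sub_const (ρ₂*w)
    have hg : HasDerivAt (fun t : ℝ => (![(r1:ℂ) * Complex.exp (Complex.I * (((c - a)*t : ℝ):ℂ)),
          (r2:ℂ) * Complex.exp (-Complex.I * ((c*t + ρ₁*w : ℝ):ℂ)),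
          (r3:ℂ) * Complex.exp (-Complex.I * ((c*t - ρ₂*w : ℝ):ℂ))] : Fin 3 → ℂ))
        (![Complex.I * ((c-a : ℝ):ℂ) * ((r1:ℂ) * Complex.exp (Complex.I * (((c-a)*v : ℝ):ℂ))),
          -Complex.I * ((c : ℝ):ℂ) * ((r2:ℂ) * Complex.exp (-Complex.I * ((c*v + ρ₁*w : ℝ):ℂ))),
          -Complex.I * ((c : ℝ):ℂ) * ((r3:ℂ) * Complex.exp (-Complex.I * ((c*v - ρ₂*w : ℝ):ℂ)))]) v := by
      rw [hasDerivAt_pi]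
      intro i
      fin_cases i
      · exact aux_hasDerivAt r1 Complex.I hf1
      · exact aux_hasDerivAt r2 (-Complex.I) hf2
      · exact aux_hasDerivAt r3 (-Complex.I) hf3
    have hY : HasDerivAt (fun t => y t w)
        ((WithLp.equiv 2 (Fin 3 → ℂ)).symm
          ![Complex.I * ((c-a : ℝ):ℂ) * ((r1:ℂ) * Complex.exp (Complex.I * (((c-a)*v : ℝ):ℂ))),
          -Complex.I * ((c : ℝ):ℂ) * ((r2:ℂ) * Complex.exp (-Complex.I * ((c*v + ρ₁*w : ℝ):ℂ))),
          -Complex.I * ((c : ℝ):ℂ) * ((r3:ℂ) * Complex.exp (-Complex.I * ((c*v - ρ₂*w : ℝ):ℂ)))]) v := by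
      have he : (fun t => y t w) = fun t =>
          (PiLp.continuousLinearEquiv 2 ℝ (fun _ : Fin 3 => ℂ)).symm
          (![(r1:ℂ) * Complex.exp (Complex.I * (((c - a)*t : ℝ):ℂ)),
          (r2:ℂ) * Complex.exp (-Complex.I * ((c*t + ρ₁*w : ℝ):ℂ)),
          (r3:ℂ) * Complex.exp (-Complex.I * ((c*t - ρ₂*w : ℝ):ℂ))] : Fin 3 → ℂ) := by
        funext t
        rw [hy t w]
        rfl
      have hY' := ((PiLp.continuousLinearEquiv 2 ℝ
        (fun _ : Fin 3 => ℂ)).symm.hasFDerivAt).comp_hasDerivAt v hg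
      rw [he]
      exact hY'
    rw [hY.deriv, hy v w]
    simp only [PiLp.inner_apply, Fin.sum_univ_three, WithLp.equiv_symm_apply, PiLp.toLp_apply,
      PiLp.smul_apply, Matrix.cons_val_zero, Matrix.cons_val_one, Matrix.head_cons,
      Matrix.cons_val_two, Matrix.tail_cons, RCLike.inner_apply, smul_eq_mul]
    rw [exp_I_ofReal, exp_negI_ofReal, exp_negI_ofReal]
    simp only [map_mul, map_add, map_sub, Complex.conj_I, Complex.conj_ofReal, map_neg]
    simp only [Complex.add_re, Complex.sub_re, Complex.neg_re, Complex.mul_re, Complex.mul_im,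
      Complex.add_im, Complex.sub_im, Complex.neg_im, Complex.ofReal_re, Complex.ofReal_im,
      Complex.I_re, Complex.I_im]
    linear_combination ((c-a)*r1^2)*P1 + (-(c*r2^2))*P2 + (-(c*r3^2))*P3
      + (c-a)*hr1sq - c*hr2sq - c*hr3sq + hcv
  · -- w-direction
    have hf2 : HasDerivAt (fun t : ℝ => c*v + ρ₁*t) ρ₁ w := by
      simpa using ((hasDerivAt_id w).const_mul ρ₁).const_add (c*v)
    have hf3 : HasDerivAt (fun t : ℝ => c*v - ρ₂*t) (-ρ₂) w := by
      simpa using ((hasDerivAt_id w).const_mul ρ₂).const_sub (c*v)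
    have hg : HasDerivAt (fun t : ℝ => (![(r1:ℂ) * Complex.exp (Complex.I * (((c - a)*v : ℝ):ℂ)),
          (r2:ℂ) * Complex.exp (-Complex.I * ((c*v + ρ₁*t : ℝ):ℂ)),
          (r3:ℂ) * Complex.exp (-Complex.I * ((c*v - ρ₂*t : ℝ):ℂ))] : Fin 3 → ℂ))
        (![0,
          -Complex.I * ((ρ₁ : ℝ):ℂ) * ((r2:ℂ) * Complex.exp (-Complex.I * ((c*v + ρ₁*w : ℝ):ℂ))),
          -Complex.I * ((-ρ₂ : ℝ):ℂ) * ((r3:ℂ) * Complex.exp (-Complex.I * ((c*v - ρ₂*w : ℝ):ℂ)))]) w := by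
      rw [hasDerivAt_pi]
      intro i
      fin_cases i
      · exact hasDerivAt_const w ((r1:ℂ) * Complex.exp (Complex.I * (((c - a)*v : ℝ):ℂ)))
      · exact aux_hasDerivAt r2 (-Complex.I) hf2
      · exact aux_hasDerivAt r3 (-Complex.I) hf3
    have hY : HasDerivAt (fun t => y v t)
        ((WithLp.equiv 2 (Fin 3 → ℂ)).symm
          ![0,
          -Complex.I * ((ρ₁ : ℝ):ℂ) * ((r2:ℂ) * Complex.exp (-Complex.I * ((c*v + ρ₁*w : ℝ):ℂ))),
          -Complex.I * ((-ρ₂ : ℝ):ℂ) * ((r3:ℂ) * Complex.exp (-Complex.I * ((c*v - ρ₂*w : ℝ):ℂ)))]) w := by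
      have he : (fun t => y v t) = fun t =>
          (PiLp.continuousLinearEquiv 2 ℝ (fun _ : Fin 3 => ℂ)).symm
          (![(r1:ℂ) * Complex.exp (Complex.I * (((c - a)*v : ℝ):ℂ)),
          (r2:ℂ) * Complex.exp (-Complex.I * ((c*v + ρ₁*t : ℝ):ℂ)),
          (r3:ℂ) * Complex.exp (-Complex.I * ((c*v - ρ₂*t : ℝ):ℂ))] : Fin 3 → ℂ) := by
        funext t
        rw [hy v t]
        rfl
      have hY' := ((PiLp.continuousLinearEquiv 2 ℝ
        (fun _ : Fin 3 => ℂ)).symm.hasFDerivAt).comp_hasDerivAt w hg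
      rw [he]
      exact hY'
    rw [hY.deriv, hy v w]
    simp only [PiLp.inner_apply, Fin.sum_univ_three, WithLp.equiv_symm_apply, PiLp.toLp_apply,
      PiLp.smul_apply, Matrix.cons_val_zero, Matrix.cons_val_one, Matrix.head_cons,
      Matrix.cons_val_two, Matrix.tail_cons, RCLike.inner_apply, smul_eq_mul]
    rw [exp_I_ofReal, exp_negI_ofReal, exp_negI_ofReal]
    simp only [map_mul, map_add, map_sub, Complex.conj_I, Complex.conj_ofReal, map_neg, map_zero]
    simp only [Complex.add_re, Complex.sub_re, Complex.neg_re, Complex.mul_re, Complex.mul_im,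
      Complex.add_im, Complex.sub_im, Complex.neg_im, Complex.ofReal_re, Complex.ofReal_im,
      Complex.I_re, Complex.I_im, Complex.zero_re, Complex.zero_im]
    linear_combination (-(ρ₁*r2^2))*P2 + (ρ₂*r3^2)*P3 - ρ₁*hr2sq + ρ₂*hr3sq + hcw
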